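/- Let N ≥ 1, 0 < s < 1, let Ω ⊂ ℝᴺ be a bounded measurable set, and let φ : (0,∞) → (0,∞) satisfy (φ₁) and (φ₂) with Φ(t) = ∫₀^{|t|} τφ(τ) dτ. Then there exists a constant C > 0, depending only on s, N, Φ and Ω, such that for every measurable u : ℝᴺ → ℝ with u = 0 almost everywhere on ℝᴺ ∖ Ω, the modular Poincaré inequality ∫_Ω Φ(|u(x)|) dx ≤ ∬_{ℝᴺ×ℝᴺ} Φ(C |u(x) − u(y)| / |x−y|ˢ) |x−y|^{−N} dx dy holds, both sides being Lebesgue integrals with values in [0,∞]. -/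

import Mathlib

open MeasureTheory Filter Set
open scoped ENNReal NNReal

/-- Modular Poincaré inequality: for a bounded measurable `Ω ⊂ ℝᴺ` and
`0 < s < 1`, there is `C > 0` (depending only on `s, N, Φ, Ω`) such that every measurable
`u` vanishing a.e. outside `Ω` satisfies
`∫_Ω Φ(|u|) ≤ ∬ Φ(C|u(x) − u(y)|/|x−y|ˢ)|x−y|^{−N} dx dy` (integrals valued in `[0,∞]`). -/
theorem stmt17
    (N : ℕ) (hN : 1 ≤ N) (s : ℝ) (hs0 : 0 < s) (hs1 : s < 1)
    (Ω : Set (EuclideanSpace ℝ (Fin N)))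
    (hΩm : MeasurableSet Ω) (hΩb : Bornology.IsBounded Ω)
    (φ : ℝ → ℝ)
    (hφpos : ∀ t : ℝ, 0 < t → 0 < φ t)
    (hφmono : StrictMonoOn (fun t => t * φ t) (Set.Ioi (0:ℝ)))
    (hφ0 : Tendsto (fun t => t * φ t) (nhdsWithin 0 (Set.Ioi 0)) (nhds 0))
    (hφtop : Tendsto (fun t => t * φ t) atTop atTop)
    (Φ : ℝ → ℝ)
    (hΦ : ∀ t : ℝ, Φ t = ∫ τ in (0:ℝ)..|t|, τ * φ τ) :
    ∃ C : ℝ, 0 < C ∧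
      ∀ u : EuclideanSpace ℝ (Fin N) → ℝ, Measurable u →
        (∀ᵐ x ∂(volume.restrict Ωᶜ), u x = 0) →
        ∫⁻ x in Ω, ENNReal.ofReal (Φ |u x|)
          ≤ ∫⁻ p : EuclideanSpace ℝ (Fin N) × EuclideanSpace ℝ (Fin N),
              ENNReal.ofReal (Φ (C * |u p.1 - u p.2| / dist p.1 p.2 ^ s))
                * ENNReal.ofReal (dist p.1 p.2 ^ (-(N:ℝ))) := by
  classical
  -- basic facts about g τ = τ * φ τ
  have hgpos : ∀ t : ℝ, 0 < t → 0 < t * φ t := fun t ht => mul_pos ht (hφpos t ht)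
  have hgmono : MonotoneOn (fun τ : ℝ => τ * φ τ) (Set.Ici 0) := by
    intro a ha b hb hab
    rcases eq_or_lt_of_le (mem_Ici.1 ha : (0:ℝ) ≤ a) with h0 | h0
    · rcases eq_or_lt_of_le (((mem_Ici.1 ha).trans hab) : (0:ℝ) ≤ b) with h1 | h1
      · simp [← h0, ← h1]
      · simpa [← h0] using (hgpos b h1).le
    · rcases eq_or_lt_of_le hab with h2 | h2
      · simp [h2]
      · exact (hφmono h0 (h0.trans h2) h2).le
  have hgint : ∀ a b : ℝ, 0 ≤ a → a ≤ b → IntervalIntegrable (fun τ : ℝ => τ * φ τ) volume a b := by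
    intro a b ha hab
    apply MonotoneOn.intervalIntegrable
    intro x hx y hy hxy
    rw [Set.uIcc_of_le hab] at hx hy
    exact hgmono (mem_Ici.2 (ha.trans hx.1)) (mem_Ici.2 (ha.trans hy.1)) hxy
  have hΦ0 : Φ 0 = 0 := by rw [hΦ]; simp
  have hΦnonneg : ∀ t : ℝ, 0 ≤ Φ t := by
    intro t
    rw [hΦ]
    apply intervalIntegral.integral_nonneg (abs_nonneg t)
    intro τ hτ
    rcases eq_or_lt_of_le hτ.1 with h | h
    · simp [← h]
    · exact (hgpos τ h).le
  have hΦadd : ∀ a b : ℝ, 0 ≤ a → a ≤ b → Φ b = Φ a + ∫ τ in a..b, τ * φ τ := by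
    intro a b ha hab
    rw [hΦ, hΦ, abs_of_nonneg ha, abs_of_nonneg (ha.trans hab),
      ← intervalIntegral.integral_add_adjacent_intervals (hgint 0 a le_rfl ha) (hgint a b ha hab)]
  have hΦmono : ∀ a b : ℝ, 0 ≤ a → a ≤ b → Φ a ≤ Φ b := by
    intro a b ha hab
    rw [hΦadd a b ha hab]
    have : 0 ≤ ∫ τ in a..b, τ * φ τ := by
      apply intervalIntegral.integral_nonneg hab
      intro τ hτ
      rcases eq_or_lt_of_le (ha.trans hτ.1) with h | h
      · simp [← h]
      · exact (hgpos τ h).le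
    linarith
  -- key "convexity" estimate : K * Φ t ≤ Φ (K * t) for K ≥ 1, t ≥ 0
  have hKey : ∀ K t : ℝ, 1 ≤ K → 0 ≤ t → K * Φ t ≤ Φ (K * t) := by
    intro K t hK ht
    rcases eq_or_lt_of_le ht with h | h
    · rw [← h, mul_zero, hΦ0, mul_zero]
    · have htK : t ≤ K * t := le_mul_of_one_le_left h.le hK
      have h1 : Φ t ≤ t * (t * φ t) := by
        have := intervalIntegral.integral_mono_on h.le (hgint 0 t le_rfl h.le)
          (intervalIntegrable_const (c := t * φ t))
          (fun x hx => hgmono (mem_Ici.2 hx.1) (mem_Ici.2 h.le) hx.2)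
        rw [hΦ t, abs_of_nonneg h.le]
        simpa using this
      have h2 : (K - 1) * (t * (t * φ t)) ≤ ∫ τ in t..(K * t), τ * φ τ := by
        have := intervalIntegral.integral_mono_on htK
          (intervalIntegrable_const (c := t * φ t))
          (hgint t (K * t) h.le htK)
          (fun x hx => hgmono (mem_Ici.2 h.le) (mem_Ici.2 (h.le.trans hx.1)) hx.1)
        simp only [intervalIntegral.integral_const, smul_eq_mul] at this
        calc (K - 1) * (t * (t * φ t)) = (K * t - t) * (t * φ t) := by ring
          _ ≤ _ := this
      have h3 : Φ (K * t) = Φ t + ∫ τ in t..(K * t), τ * φ τ := hΦadd t (K * t) h.le htK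
      have h4 : (K - 1) * Φ t ≤ (K - 1) * (t * (t * φ t)) :=
        mul_le_mul_of_nonneg_left h1 (by linarith)
      linarith
  -- monotone (hence measurable) version of Φ ∘ |·|
  have hΨmono : Monotone (fun t : ℝ => Φ (max t 0)) := fun a b hab =>
    hΦmono _ _ (le_max_right _ _) (max_le_max hab le_rfl)
  have hΨmeas : Measurable (fun t : ℝ => Φ (max t 0)) := hΨmono.measurable
  -- geometry
  obtain ⟨R₀, hR₀⟩ := hΩb.subset_closedBall (0 : EuclideanSpace ℝ (Fin N))
  set R : ℝ := max R₀ 1 with hR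
  have hR1 : (1:ℝ) ≤ R := le_max_right _ _
  have hΩR : Ω ⊆ Metric.closedBall 0 R :=
    hR₀.trans (Metric.closedBall_subset_closedBall (le_max_left _ _))
  set z : EuclideanSpace ℝ (Fin N) :=
    EuclideanSpace.single (⟨0, hN⟩ : Fin N) (R + 1/2) with hz
  have hznorm : ‖z‖ = R + 1/2 := by
    rw [hz, EuclideanSpace.norm_single, Real.norm_eq_abs, abs_of_pos (by linarith)]
  set A : Set (EuclideanSpace ℝ (Fin N)) := Metric.ball z (1/4) with hA
  have hAmeas : MeasurableSet A := measurableSet_ball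
  have hApos : 0 < volume A := Metric.measure_ball_pos _ _ (by norm_num)
  have hAfin : volume A < ⊤ := measure_ball_lt_top
  have hAnorm : ∀ y ∈ A, R < ‖y‖ := by
    intro y hy
    have : dist y z < 1/4 := Metric.mem_ball.1 hy
    have h1 : ‖z‖ - ‖y‖ ≤ dist y z := by
      rw [dist_comm, dist_eq_norm]
      exact (norm_sub_norm_le _ _).trans (le_of_eq rfl)
    linarith [hznorm ▸ h1]
  have hAΩ : ∀ y ∈ A, y ∉ Ω := by
    intro y hy hyΩ
    have := hΩR hyΩ
    rw [Metric.mem_closedBall, dist_zero_right] at this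
    exact absurd this (not_le.2 (hAnorm y hy))
  set D : ℝ := 2 * R + 1 with hD
  have hDpos : (0:ℝ) < D := by simp [hD]; linarith
  have hdist_le : ∀ x ∈ Ω, ∀ y ∈ A, dist x y ≤ D := by
    intro x hx y hy
    have h1 : ‖x‖ ≤ R := by
      have := hΩR hx; rwa [Metric.mem_closedBall, dist_zero_right] at this
    have h2 : ‖y‖ ≤ R + 3/4 := by
      have : dist y z < 1/4 := Metric.mem_ball.1 hy
      have h3 : ‖y‖ - ‖z‖ ≤ dist y z := by
        rw [dist_eq_norm]; exact norm_sub_norm_le _ _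
      linarith [hznorm ▸ h3]
    calc dist x y ≤ ‖x‖ + ‖y‖ := dist_le_norm_add_norm x y
      _ ≤ D := by rw [hD]; linarith
  have hdist_pos : ∀ x ∈ Ω, ∀ y ∈ A, 0 < dist x y := by
    intro x hx y hy
    rw [dist_pos]
    intro hxy
    have h1 : ‖x‖ ≤ R := by
      have := hΩR hx; rwa [Metric.mem_closedBall, dist_zero_right] at this
    exact absurd (hxy ▸ h1) (not_le.2 (hAnorm y hy))
  set a : ℝ := (volume A).toReal with ha_def
  have ha : 0 < a := ENNReal.toReal_pos hApos.ne' hAfin.ne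
  set K : ℝ := max 1 (D ^ (N:ℝ) / a) with hKdef
  have hK1 : (1:ℝ) ≤ K := le_max_left _ _
  have hKa : D ^ (N:ℝ) / a ≤ K := le_max_right _ _
  have hDNpos : (0:ℝ) < D ^ (N:ℝ) := Real.rpow_pos_of_pos hDpos _
  have hDspos : (0:ℝ) < D ^ s := Real.rpow_pos_of_pos hDpos _
  refine ⟨K * D ^ s, mul_pos (by linarith) hDspos, ?_⟩
  intro u hu hu0
  set F : EuclideanSpace ℝ (Fin N) → ℝ≥0∞ := fun x => ENNReal.ofReal (Φ |u x|) with hF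
  have hFmeas : Measurable F := by
    have : F = fun x => ENNReal.ofReal ((fun t => Φ (max t 0)) |u x|) := by
      funext x
      simp [hF, max_eq_left (abs_nonneg (u x))]
    rw [this]
    exact ENNReal.measurable_ofReal.comp (hΨmeas.comp hu.abs)
  -- the null set outside Ω where u might not vanish
  set Z : Set (EuclideanSpace ℝ (Fin N)) := Ωᶜ ∩ {x | u x ≠ 0} with hZdef
  have hZmeas : MeasurableSet Z :=
    hΩm.compl.inter ((hu (measurableSet_singleton 0)).compl)
  have hZ0 : volume Z = 0 := by
    have := hu0
    rw [ae_iff, Measure.restrict_apply (by exact (hu (measurableSet_singleton 0)).compl)] at this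
    simpa [hZdef, Set.inter_comm] using this
  have hprod0 : (volume : Measure (EuclideanSpace ℝ (Fin N) × EuclideanSpace ℝ (Fin N)))
      {p | p.2 ∈ Z} = 0 := by
    have : {p : EuclideanSpace ℝ (Fin N) × EuclideanSpace ℝ (Fin N) | p.2 ∈ Z}
        = Set.univ ×ˢ Z := by ext p; simp
    rw [this, Measure.volume_eq_prod, Measure.prod_prod, hZ0, mul_zero]
  have hae : ∀ᵐ p : EuclideanSpace ℝ (Fin N) × EuclideanSpace ℝ (Fin N) ∂volume, p.2 ∉ Z :=
    measure_eq_zero_iff_ae_notMem.1 hprod0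
  set c : ℝ≥0∞ := ENNReal.ofReal (K * D ^ (-(N:ℝ))) with hc
  have hone : (1:ℝ≥0∞) ≤ c * volume A := by
    have hvolA : volume A = ENNReal.ofReal a := (ENNReal.ofReal_toReal hAfin.ne).symm
    rw [hc, hvolA, ← ENNReal.ofReal_mul (by positivity)]
    have hDN : D ^ (N:ℝ) * D ^ (-(N:ℝ)) = 1 := by
      rw [← Real.rpow_add hDpos, add_neg_cancel, Real.rpow_zero]
    have : (1:ℝ) ≤ K * D ^ (-(N:ℝ)) * a := by
      have hDneg : (0:ℝ) < D ^ (-(N:ℝ)) := Real.rpow_pos_of_pos hDpos _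
      have h1 : D ^ (N:ℝ) / a * D ^ (-(N:ℝ)) * a ≤ K * D ^ (-(N:ℝ)) * a :=
        mul_le_mul_of_nonneg_right (mul_le_mul_of_nonneg_right hKa hDneg.le) ha.le
      have h2 : D ^ (N:ℝ) / a * D ^ (-(N:ℝ)) * a = 1 := by
        have hrr : D ^ (N:ℝ) / a * D ^ (-(N:ℝ)) * a
            = (D ^ (N:ℝ) * D ^ (-(N:ℝ))) * (a / a) := by ring
        rw [hrr, hDN, div_self ha.ne', one_mul]
      linarith
    calc (1:ℝ≥0∞) = ENNReal.ofReal 1 := by simp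
      _ ≤ _ := ENNReal.ofReal_le_ofReal this
  calc ∫⁻ x in Ω, ENNReal.ofReal (Φ |u x|)
      = 1 * ∫⁻ x in Ω, F x := (one_mul _).symm
    _ ≤ (c * volume A) * ∫⁻ x in Ω, F x := mul_le_mul_left hone _
    _ = c * ((∫⁻ x in Ω, F x) * volume A) := by ring
    _ = c * ∫⁻ x in Ω, F x * volume A := by rw [lintegral_mul_const _ hFmeas]
    _ = c * ∫⁻ p in Ω ×ˢ A, F p.1 := by
        rw [Measure.volume_eq_prod, ← Measure.prod_restrict,
          lintegral_prod (fun p => F p.1) ((hFmeas.comp measurable_fst).aemeasurable)]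
        simp [lintegral_const, Measure.restrict_apply_univ]
    _ = ∫⁻ p in Ω ×ˢ A, c * F p.1 := (lintegral_const_mul c (hFmeas.comp measurable_fst)).symm
    _ = ∫⁻ p, (Ω ×ˢ A).indicator (fun p => c * F p.1) p := by
        rw [lintegral_indicator (hΩm.prod hAmeas)]
    _ ≤ _ := by
        apply lintegral_mono_ae
        filter_upwards [hae] with p hp
        by_cases hpmem : p ∈ Ω ×ˢ A
        · rw [Set.indicator_of_mem hpmem]
          obtain ⟨hx, hy⟩ := hpmem
          have huy : u p.2 = 0 := by
            by_contra h
            exact hp ⟨hAΩ _ hy, h⟩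
          have hdpos := hdist_pos _ hx _ hy
          have hdle := hdist_le _ hx _ hy
          set d : ℝ := dist p.1 p.2 with hd
          set t : ℝ := |u p.1| with ht
          have htnonneg : 0 ≤ t := abs_nonneg _
          -- (a) D^{-N} ≤ d^{-N}
          have hdNa : D ^ (-(N:ℝ)) ≤ d ^ (-(N:ℝ)) := by
            rw [Real.rpow_neg hdpos.le, Real.rpow_neg hDpos.le]
            have h1 : d ^ (N:ℝ) ≤ D ^ (N:ℝ) :=
              Real.rpow_le_rpow hdpos.le hdle (Nat.cast_nonneg N)
            have h2 : (0:ℝ) < d ^ (N:ℝ) := Real.rpow_pos_of_pos hdpos _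
            exact inv_anti₀ h2 h1
          -- (b) K * t ≤ (K * D^s) * t / d^s
          have hdspos : (0:ℝ) < d ^ s := Real.rpow_pos_of_pos hdpos _
          have hds : d ^ s ≤ D ^ s := Real.rpow_le_rpow hdpos.le hdle hs0.le
          have hb : K * t ≤ K * D ^ s * t / d ^ s := by
            rw [le_div_iff₀ hdspos]
            have hKt : 0 ≤ K * t := mul_nonneg (by linarith) htnonneg
            nlinarith
          -- (c)
          have hc1 : K * Φ t ≤ Φ (K * D ^ s * t / d ^ s) :=
            (hKey K t hK1 htnonneg).trans
              (hΦmono _ _ (mul_nonneg (by linarith) htnonneg) hb)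
          have habs : |u p.1 - u p.2| = t := by rw [huy, sub_zero]
          rw [habs]
          have hreal : K * D ^ (-(N:ℝ)) * Φ t
              ≤ Φ (K * D ^ s * t / d ^ s) * d ^ (-(N:ℝ)) := by
            have hΦtn := hΦnonneg t
            have hDNn : (0:ℝ) ≤ D ^ (-(N:ℝ)) := (Real.rpow_pos_of_pos hDpos _).le
            calc K * D ^ (-(N:ℝ)) * Φ t = (K * Φ t) * D ^ (-(N:ℝ)) := by ring
              _ ≤ Φ (K * D ^ s * t / d ^ s) * d ^ (-(N:ℝ)) := by
                  apply mul_le_mul hc1 hdNa hDNn (hΦnonneg _)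
          calc c * F p.1 = ENNReal.ofReal (K * D ^ (-(N:ℝ)) * Φ t) := by
                rw [hc, hF, ← ENNReal.ofReal_mul (by positivity)]
            _ ≤ ENNReal.ofReal (Φ (K * D ^ s * t / d ^ s) * d ^ (-(N:ℝ))) :=
                ENNReal.ofReal_le_ofReal hreal
            _ = _ := by
                rw [ENNReal.ofReal_mul (hΦnonneg _)]
        · rw [Set.indicator_of_notMem hpmem]
          exact zero_le
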